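/- Let D_n denote the set of finite sequences of positive integers taken from {1,...,n-1} that are admissible, meaning that between any two occurrences of the same value s in the sequence there is an entry strictly greater than s. Then for all n ≥ 2, the cardinality of D_n satisfies |D_n| = |D_{n-1}|^2 + |D_{n-1}|. -/

import Mathlib

/-- A finite sequence of positive integers is admissible if between any two
occurrences of the same value there is a strictly larger entry. -/
def IsAdmissibleSeq (l : List ℕ) : Prop :=
  ∀ i j : ℕ, i < j → ∀ (hi : i < l.length) (hj : j < l.length),
    l.get ⟨i, hi⟩ = l.get ⟨j, hj⟩ →
    ∃ k : ℕ, i < k ∧ k < j ∧ ∃ hk : k < l.length, l.get ⟨i, hi⟩ < l.get ⟨k, hk⟩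

/-- `Dset n` is the set of admissible sequences with entries in `{1, ..., n-1}`. -/
def Dset (n : ℕ) : Set (List ℕ) :=
  {l | (∀ x ∈ l, 1 ≤ x ∧ x ≤ n - 1) ∧ IsAdmissibleSeq l}

lemma isAdm_iff (l : List ℕ) : IsAdmissibleSeq l ↔
    ∀ i j : ℕ, i < j → ∀ (hi : i < l.length) (hj : j < l.length),
      l[i] = l[j] →
      ∃ k : ℕ, i < k ∧ k < j ∧ ∃ hk : k < l.length, l[i] < l[k] := Iff.rfl

lemma lenAMB (a b : List ℕ) (m : ℕ) : (a ++ m :: b).length = a.length + 1 + b.length := by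
  simp; omega

lemma getA (a b : List ℕ) (m i : ℕ) (h : i < a.length) :
    (a ++ m :: b)[i]'(by rw [lenAMB]; omega) = a[i] := List.getElem_append_left h

lemma getM (a b : List ℕ) (m : ℕ) :
    (a ++ m :: b)[a.length]'(by rw [lenAMB]; omega) = m := by
  rw [List.getElem_append_right (Nat.le_refl _)]
  simp only [Nat.sub_self, List.getElem_cons_zero]

lemma getB (a b : List ℕ) (m i : ℕ) (h : i < b.length) :
    (a ++ m :: b)[a.length + 1 + i]'(by rw [lenAMB]; omega) = b[i] := by
  rw [List.getElem_append_right (by omega)]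
  have h2 : a.length + 1 + i - a.length = i + 1 := by omega
  simp only [h2, List.getElem_cons_succ]

lemma mem_once {m : ℕ} {a b : List ℕ} (hl : a ++ m :: b ∈ Dset (m + 1)) :
    m ∉ a ∧ m ∉ b := by
  obtain ⟨hbd, hadm⟩ := hl
  rw [isAdm_iff] at hadm
  have hub : ∀ x ∈ a ++ m :: b, x ≤ m := by
    intro x hx; have := (hbd x hx).2; omega
  constructor
  · intro hma
    obtain ⟨i, hi, hia⟩ := List.mem_iff_getElem.mp hma
    obtain ⟨k, hk1, hk2, hk, hlt⟩ := hadm i a.length (by omega)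
      (by rw [lenAMB]; omega) (by rw [lenAMB]; omega)
      (by rw [getA a b m i hi, getM, hia])
    rw [getA a b m i hi, hia] at hlt
    have := hub _ (List.getElem_mem hk)
    omega
  · intro hmb
    obtain ⟨i, hi, hib⟩ := List.mem_iff_getElem.mp hmb
    obtain ⟨k, hk1, hk2, hk, hlt⟩ := hadm a.length (a.length + 1 + i) (by omega)
      (by rw [lenAMB]; omega) (by rw [lenAMB]; omega)
      (by rw [getM, getB a b m i hi, hib])
    rw [getM] at hlt
    have := hub _ (List.getElem_mem hk)
    omega

lemma dset_split_mem {m : ℕ} {a b : List ℕ} (hl : a ++ m :: b ∈ Dset (m + 1)) :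
    a ∈ Dset m ∧ b ∈ Dset m := by
  obtain ⟨hma, hmb⟩ := mem_once hl
  obtain ⟨hbd, hadm⟩ := hl
  rw [isAdm_iff] at hadm
  refine ⟨⟨?_, ?_⟩, ⟨?_, ?_⟩⟩
  · intro x hx
    have h1 := hbd x (by simp [hx])
    have h2 : x ≠ m := fun h => hma (h ▸ hx)
    omega
  · rw [isAdm_iff]
    intro i j hij hi hj heq
    obtain ⟨k, hk1, hk2, hk, hlt⟩ := hadm i j hij
      (by rw [lenAMB]; omega) (by rw [lenAMB]; omega)
      (by rw [getA a b m i hi, getA a b m j hj, heq])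
    have hka : k < a.length := by omega
    rw [getA a b m i hi, getA a b m k hka] at hlt
    exact ⟨k, hk1, hk2, hka, hlt⟩
  · intro x hx
    have h1 := hbd x (by simp [hx])
    have h2 : x ≠ m := fun h => hmb (h ▸ hx)
    omega
  · rw [isAdm_iff]
    intro i j hij hi hj heq
    obtain ⟨k, hk1, hk2, hk, hlt⟩ := hadm (a.length + 1 + i) (a.length + 1 + j) (by omega)
      (by rw [lenAMB]; omega) (by rw [lenAMB]; omega)
      (by rw [getB a b m i hi, getB a b m j hj, heq])
    obtain ⟨k', rfl⟩ : ∃ k', k = a.length + 1 + k' := ⟨k - a.length - 1, by omega⟩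
    have hkb : k' < b.length := by rw [lenAMB] at hk; omega
    rw [getB a b m i hi, getB a b m k' hkb] at hlt
    exact ⟨k', by omega, by omega, hkb, hlt⟩

lemma cons_mem {m : ℕ} (hm : 1 ≤ m) {a b : List ℕ} (ha : a ∈ Dset m) (hb : b ∈ Dset m) :
    a ++ m :: b ∈ Dset (m + 1) := by
  refine ⟨?_, ?_⟩
  · intro x hx
    simp only [List.mem_append, List.mem_cons] at hx
    rcases hx with h | h | h
    · have := ha.1 x h; omega
    · omega
    · have := hb.1 x h; omega
  · have hua : ∀ x ∈ a, x < m := fun x hx => by have := (ha.1 x hx).2; omega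
    have hub : ∀ x ∈ b, x < m := fun x hx => by have := (hb.1 x hx).2; omega
    have hadma := (isAdm_iff a).mp ha.2
    have hadmb := (isAdm_iff b).mp hb.2
    rw [isAdm_iff]
    intro i j hij hi hj heq
    rw [lenAMB] at hi hj
    by_cases hja : j < a.length
    · have hia : i < a.length := by omega
      rw [getA a b m i hia, getA a b m j hja] at heq
      obtain ⟨k, hk1, hk2, hk, hlt⟩ := hadma i j hij hia hja heq
      refine ⟨k, hk1, hk2, by rw [lenAMB]; omega, ?_⟩
      rwa [getA a b m i hia, getA a b m k hk]
    · by_cases hia : a.length < i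
      · obtain ⟨i', rfl⟩ : ∃ i', i = a.length + 1 + i' := ⟨i - a.length - 1, by omega⟩
        obtain ⟨j', rfl⟩ : ∃ j', j = a.length + 1 + j' := ⟨j - a.length - 1, by omega⟩
        have hib : i' < b.length := by omega
        have hjb : j' < b.length := by omega
        rw [getB a b m i' hib, getB a b m j' hjb] at heq
        obtain ⟨k, hk1, hk2, hk, hlt⟩ := hadmb i' j' (by omega) hib hjb heq
        refine ⟨a.length + 1 + k, by omega, by omega, by rw [lenAMB]; omega, ?_⟩
        rwa [getB a b m i' hib, getB a b m k hk]
      · -- i ≤ a.length ≤ j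
        rcases eq_or_lt_of_le (not_lt.mp hia) with hieq | hilt
        · -- i = a.length, so l[i] = m, but l[j] < m
          exfalso
          subst hieq
          obtain ⟨j', rfl⟩ : ∃ j', j = a.length + 1 + j' := ⟨j - a.length - 1, by omega⟩
          have hjb : j' < b.length := by omega
          rw [getM, getB a b m j' hjb] at heq
          have := hub _ (List.getElem_mem hjb)
          omega
        · rcases eq_or_lt_of_le (not_lt.mp hja) with hjeq | hjlt
          · exfalso
            subst hjeq
            have hia' : i < a.length := by omega
            rw [getA a b m i hia', getM] at heq
            have := hua _ (List.getElem_mem hia')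
            omega
          · -- i < a.length < j : witness k = a.length
            have hia' : i < a.length := hilt
            refine ⟨a.length, hilt, hjlt, by rw [lenAMB]; omega, ?_⟩
            rw [getA a b m i hia', getM]
            exact hua _ (List.getElem_mem hia')

lemma append_m_inj {m : ℕ} : ∀ (a₁ : List ℕ) {a₂ b₁ b₂ : List ℕ}, m ∉ a₁ → m ∉ a₂ →
    a₁ ++ m :: b₁ = a₂ ++ m :: b₂ → a₁ = a₂ ∧ b₁ = b₂ := by
  intro a₁
  induction a₁ with
  | nil =>
    intro a₂ b₁ b₂ _ h2 heq
    cases a₂ with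
    | nil => simpa using heq
    | cons h t =>
      simp only [List.nil_append, List.cons_append, List.cons.injEq] at heq
      exact absurd (heq.1 ▸ (List.mem_cons_self : h ∈ h :: t)) (heq.1 ▸ h2)
  | cons h1 t1 ih =>
    intro a₂ b₁ b₂ h1m h2m heq
    cases a₂ with
    | nil =>
      simp only [List.nil_append, List.cons_append, List.cons.injEq] at heq
      exact absurd (heq.1 ▸ (List.mem_cons_self : h1 ∈ h1 :: t1)) (fun hh => h1m (by simp [heq.1]))
    | cons h2 t2 =>
      simp only [List.cons_append, List.cons.injEq] at heq
      obtain ⟨ht, hb⟩ := ih (fun h => h1m (List.mem_cons_of_mem _ h))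
        (fun h => h2m (List.mem_cons_of_mem _ h)) heq.2
      exact ⟨by rw [heq.1, ht], hb⟩

lemma not_mem_dset {m : ℕ} (hm : 1 ≤ m) {a : List ℕ} (ha : a ∈ Dset m) : m ∉ a := by
  intro h
  have := (ha.1 m h).2
  omega

lemma decomp {m : ℕ} (hm : 1 ≤ m) :
    Dset (m + 1) = Dset m ∪ (fun p : List ℕ × List ℕ => p.1 ++ m :: p.2) '' (Dset m ×ˢ Dset m) := by
  ext l
  constructor
  · intro hl
    by_cases hml : m ∈ l
    · obtain ⟨a, b, rfl⟩ := List.append_of_mem hml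
      obtain ⟨ha, hb⟩ := dset_split_mem hl
      exact Or.inr ⟨(a, b), Set.mem_prod.mpr ⟨ha, hb⟩, rfl⟩
    · refine Or.inl ⟨?_, hl.2⟩
      intro x hx
      have h1 := hl.1 x hx
      have h2 : x ≠ m := fun h => hml (h ▸ hx)
      omega
  · rintro (hl | ⟨⟨a, b⟩, hab, rfl⟩)
    · refine ⟨?_, hl.2⟩
      intro x hx
      have := hl.1 x hx
      omega
    · exact cons_mem hm (Set.mem_prod.mp hab).1 (Set.mem_prod.mp hab).2

lemma dset_sub_nil {n : ℕ} (hn : n ≤ 1) : Dset n ⊆ {[]} := by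
  intro l hl
  cases l with
  | nil => rfl
  | cons x t =>
    have := hl.1 x ((List.mem_cons_self : x ∈ x :: t))
    simp only [Set.mem_singleton_iff]
    omega

lemma dset_finite (n : ℕ) : (Dset n).Finite := by
  induction n with
  | zero => exact Set.Finite.subset (Set.finite_singleton []) (dset_sub_nil (by omega))
  | succ m ih =>
    rcases Nat.eq_zero_or_pos m with rfl | hm
    · exact Set.Finite.subset (Set.finite_singleton []) (dset_sub_nil (by omega))
    · rw [decomp hm]
      exact ih.union ((ih.prod ih).image _)

theorem card_Dset_succ (n : ℕ) (hn : 2 ≤ n) :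
    Nat.card (Dset n) = Nat.card (Dset (n - 1)) ^ 2 + Nat.card (Dset (n - 1)) := by
  obtain ⟨m, rfl⟩ : ∃ m, n = m + 1 := ⟨n - 1, by omega⟩
  have hm : 1 ≤ m := by omega
  simp only [Nat.add_sub_cancel]
  rw [Nat.card_coe_set_eq, Nat.card_coe_set_eq, decomp hm]
  have hdisj : Disjoint (Dset m)
      ((fun p : List ℕ × List ℕ => p.1 ++ m :: p.2) '' (Dset m ×ˢ Dset m)) := by
    rw [Set.disjoint_left]
    rintro l hl ⟨⟨a, b⟩, _, rfl⟩
    exact not_mem_dset hm hl (by simp)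
  have hinj : Set.InjOn (fun p : List ℕ × List ℕ => p.1 ++ m :: p.2) (Dset m ×ˢ Dset m) := by
    rintro ⟨a₁, b₁⟩ h1 ⟨a₂, b₂⟩ h2 heq
    obtain ⟨ha, hb⟩ := append_m_inj a₁ (not_mem_dset hm (Set.mem_prod.mp h1).1)
      (not_mem_dset hm (Set.mem_prod.mp h2).1) heq
    exact Prod.ext ha hb
  rw [Set.ncard_union_eq hdisj (dset_finite m) (((dset_finite m).prod (dset_finite m)).image _)]
  rw [Set.ncard_image_of_injOn hinj]
  have hprod : (Dset m ×ˢ Dset m).ncard = (Dset m).ncard * (Dset m).ncard := by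
    rw [← Nat.card_coe_set_eq, Nat.card_congr (Equiv.Set.prod _ _), Nat.card_prod,
      Nat.card_coe_set_eq]
  rw [hprod]
  ring
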